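/- Let M be a metric space, D ⊆ M a dense subset, let E and F be finite-dimensional inner product spaces over 𝕜 ∈ {ℝ, ℂ}, and let d : M → (F →L[𝕜] E) be a continuous family of linear maps such that finrank(range(d(y))) = k for every y ∈ D. Then for every x ∈ M there exist a sequence (y_n)_{n∈ℕ} in D converging to x and a subspace V of E with finrank V = k such that range(d(y_n)) converges to V in the gap metric, i.e. ‖P_{range(d(y_n))} − P_V‖ → 0. -/

import Mathlib

open FiniteDimensional Filter Module

/-- The orthogonal projection onto a subspace `V` of a finite-dimensional inner product
space, regarded as a continuous linear endomorphism. -/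
noncomputable def orthProjection {𝕜 E : Type*} [RCLike 𝕜] [NormedAddCommGroup E]
    [InnerProductSpace 𝕜 E] [FiniteDimensional 𝕜 E] (V : Submodule 𝕜 E) : E →L[𝕜] E :=
  V.subtypeL.comp (V.orthogonalProjectionOnto)

section Aux

variable {𝕜 E : Type*} [RCLike 𝕜] [NormedAddCommGroup E]
    [InnerProductSpace 𝕜 E] [FiniteDimensional 𝕜 E]

/-- The "projection-like" operator built from a finite family of vectors. -/
noncomputable def projFam (k : ℕ) (g : Fin k → E) : E →L[𝕜] E :=
  ∑ i, ContinuousLinearMap.smulRightL 𝕜 E E (innerSL 𝕜 (g i)) (g i)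

lemma projFam_continuous (k : ℕ) :
    Continuous (fun g : Fin k → E => (projFam k g : E →L[𝕜] E)) := by
  refine continuous_finset_sum _ fun i _ => ?_
  exact ((ContinuousLinearMap.smulRightL 𝕜 E E).continuous₂).comp
    (((innerSL 𝕜).continuous.comp (continuous_apply i)).prodMk (continuous_apply i))

lemma projFam_eq_orthProjection {k : ℕ} {V : Submodule 𝕜 E}
    (b : OrthonormalBasis (Fin k) 𝕜 V) :
    (projFam k (fun i => (b i : E)) : E →L[𝕜] E) = orthProjection V := by
  ext x
  have := b.orthogonalProjectionOnto_apply_eq_sum x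
  have h2 : ((V.orthogonalProjectionOnto x : V) : E) = ∑ i, (inner 𝕜 (b i : E) x) • (b i : E) := by
    rw [this]; push_cast; rfl
  simp only [projFam, orthProjection, ContinuousLinearMap.sum_apply,
    ContinuousLinearMap.coe_comp', Function.comp_apply, Submodule.coe_subtypeL',
    Submodule.coe_subtype]
  rw [h2]
  congr 1

end Aux

/-- For a continuous family `d` of linear maps of constant rank `k` on a dense subset `D`
of a metric space `M`, every point `x ∈ M` is the limit of a sequence `y n ∈ D` such that
the images `range (d (y n))` converge in the gap metric to some `k`-dimensional subspace
`V`; i.e. the fibers of the Nash blowup are non-empty. -/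
theorem nash_fiber_nonempty {𝕜 E F M : Type*} [RCLike 𝕜]
    [NormedAddCommGroup E] [InnerProductSpace 𝕜 E] [FiniteDimensional 𝕜 E]
    [NormedAddCommGroup F] [InnerProductSpace 𝕜 F] [FiniteDimensional 𝕜 F]
    [MetricSpace M] (D : Set M) (hD : Dense D) (k : ℕ)
    (d : M → (F →L[𝕜] E)) (hd : Continuous d)
    (hrk : ∀ y ∈ D, finrank 𝕜 (LinearMap.range (d y : F →ₗ[𝕜] E)) = k) :
    ∀ x : M, ∃ (y : ℕ → M) (V : Submodule 𝕜 E),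
      (∀ n, y n ∈ D) ∧ Tendsto y atTop (nhds x) ∧ finrank 𝕜 V = k ∧
        Tendsto (fun n => ‖orthProjection (LinearMap.range (d (y n) : F →ₗ[𝕜] E)) - orthProjection V‖)
          atTop (nhds 0) := by
  intro x
  -- choose a sequence in D converging to x
  obtain ⟨y, hyD, hyx⟩ := mem_closure_iff_seq_limit.1 (hD x)
  -- for each n, an orthonormal basis of the range, indexed by Fin k
  have hbasis : ∀ n, ∃ b : OrthonormalBasis (Fin k) 𝕜 (LinearMap.range (d (y n) : F →ₗ[𝕜] E)),
      True := by
    intro n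
    exact ⟨(stdOrthonormalBasis 𝕜 (LinearMap.range (d (y n) : F →ₗ[𝕜] E))).reindex
      (finCongr (hrk _ (hyD n))), trivial⟩
  choose b _ using hbasis
  set e : ℕ → Fin k → E := fun n i => (b n i : E) with he
  -- the sequence e lives in the compact product of unit spheres
  have hmem : ∀ n, e n ∈ Set.pi Set.univ (fun _ : Fin k => Metric.sphere (0 : E) 1) := by
    intro n i _
    simp only [he, mem_sphere_zero_iff_norm]; exact (b n).orthonormal.1 i
  haveI : ProperSpace E := FiniteDimensional.proper 𝕜 E
  have hcpt : IsCompact (Set.pi Set.univ (fun _ : Fin k => Metric.sphere (0 : E) 1)) :=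
    isCompact_univ_pi fun _ => isCompact_sphere 0 1
  obtain ⟨f, _, φ, hφ, hconv⟩ := hcpt.tendsto_subseq hmem
  -- f is orthonormal
  have hip : ∀ i j : Fin k, Tendsto (fun n => (inner 𝕜 (e (φ n) i) (e (φ n) j)))
      atTop (nhds (inner 𝕜 (f i) (f j))) := by
    intro i j
    have hi : Tendsto (fun n => e (φ n) i) atTop (nhds (f i)) :=
      (continuous_apply i).continuousAt.tendsto.comp hconv
    have hj : Tendsto (fun n => e (φ n) j) atTop (nhds (f j)) :=
      (continuous_apply j).continuousAt.tendsto.comp hconv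
    exact (continuous_inner.tendsto _).comp (hi.prodMk_nhds hj)
  have hfon : Orthonormal 𝕜 f := by
    rw [orthonormal_iff_ite]
    intro i j
    refine tendsto_nhds_unique (hip i j) ?_
    have : ∀ n, (inner 𝕜 (e (φ n) i) (e (φ n) j)) = if i = j then 1 else 0 := by
      intro n
      have := orthonormal_iff_ite.1 (b (φ n)).orthonormal i j
      simpa [he, Submodule.coe_inner] using this
    simp only [this]
    exact tendsto_const_nhds
  -- the limit subspace
  set V : Submodule 𝕜 E := Submodule.span 𝕜 (Set.range f) with hV
  have hli := hfon.linearIndependent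
  have hfinV : finrank 𝕜 V = k := by
    rw [hV, finrank_span_eq_card hli, Fintype.card_fin]
  -- orthonormal basis of V from f
  have hfon' : Orthonormal 𝕜 (Basis.span hli) := by
    rw [orthonormal_iff_ite] at hfon ⊢
    intro i j
    rw [← hfon i j]
    simp [Submodule.coe_inner, Basis.span_apply]
  set bV : OrthonormalBasis (Fin k) 𝕜 V := (Basis.span hli).toOrthonormalBasis hfon'
  have hbV : ∀ i, (bV i : E) = f i := by
    intro i
    simp [bV, Basis.coe_toOrthonormalBasis, Basis.span_apply]
  -- convergence of projections
  have hP : Tendsto (fun n => (projFam k (e (φ n)) : E →L[𝕜] E)) atTop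
      (nhds (projFam k f)) :=
    ((projFam_continuous k).tendsto f).comp hconv
  have hPn : ∀ n, (projFam k (e (φ n)) : E →L[𝕜] E)
      = orthProjection (LinearMap.range (d (y (φ n)) : F →ₗ[𝕜] E)) := fun n =>
    projFam_eq_orthProjection (b (φ n))
  have hPV : (projFam k f : E →L[𝕜] E) = orthProjection V := by
    have := projFam_eq_orthProjection bV
    rwa [funext hbV] at this
  refine ⟨y ∘ φ, V, fun n => hyD (φ n), hyx.comp hφ.tendsto_atTop, hfinV, ?_⟩
  have : Tendsto (fun n => orthProjection (LinearMap.range (d (y (φ n)) : F →ₗ[𝕜] E)))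
      atTop (nhds (orthProjection V)) := by
    rw [← hPV]
    exact hP.congr fun n => hPn n
  have h0 := tendsto_iff_norm_sub_tendsto_zero.1 this
  simpa using h0
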